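/- Suppose $n \ge 9$ is not a prime power, and suppose $p$ and $r$ are primes such that every binomial coefficient $\binom{n}{k}$ with $1 \le k \le n-1$ is divisible by $p$ or by $r$. If $d$ is a nontrivial proper divisor of $n$, then $\frac{n!}{(d!)^{n/d}(n/d)!}$ is divisible by $p$ or by $r$. -/

import Mathlib

open Nat

namespace SW11

/-- base-`q` digit sum -/
def S (q x : ℕ) : ℕ := (Nat.digits q x).sum

lemma S_le (q x : ℕ) : S q x ≤ x := by
  simp only [S]
  exact Nat.digit_sum_le q x

lemma S_def {q : ℕ} (hq : 1 < q) {x : ℕ} (hx : 0 < x) :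
    S q x = x % q + S q (x / q) := by
  simp only [S]
  rw [Nat.digits_def' hq hx, List.sum_cons]

lemma S_of_lt {q x : ℕ} (hx : 0 < x) (hxq : x < q) : S q x = x := by
  simp only [S]
  rw [Nat.digits_of_lt q x (by omega) hxq, List.sum_cons, List.sum_nil]
  omega

lemma S_pos {q : ℕ} (hq : 1 < q) : ∀ {x : ℕ}, 0 < x → 1 ≤ S q x := by
  intro x
  induction x using Nat.strong_induction_on with
  | _ x ih =>
    intro hx
    rw [S_def hq hx]
    rcases Nat.eq_zero_or_pos (x / q) with h | h
    · have h2 := Nat.div_add_mod x q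
      rw [h, Nat.mul_zero, Nat.zero_add] at h2
      omega
    · have := ih (x / q) (Nat.div_lt_self hx hq) h
      omega

lemma S_eq_one {q : ℕ} (hq : 1 < q) : ∀ {x : ℕ}, S q x = 1 → ∃ α, x = q ^ α := by
  intro x
  induction x using Nat.strong_induction_on with
  | _ x ih =>
    intro hS
    have hx : 0 < x := by
      by_contra h
      have hx0 : x = 0 := by omega
      subst hx0
      simp [S] at hS
    rw [S_def hq hx] at hS
    rcases Nat.eq_zero_or_pos (x / q) with h | h
    · have h2 := Nat.div_add_mod x q
      rw [h, Nat.mul_zero, Nat.zero_add] at h2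
      rw [h] at hS
      simp [S] at hS
      exact ⟨0, by rw [pow_zero]; omega⟩
    · have h1 := S_pos hq h
      have hmod : x % q = 0 := by omega
      have hS2 : S q (x / q) = 1 := by omega
      obtain ⟨α, hα⟩ := ih (x / q) (Nat.div_lt_self hx hq) hS2
      refine ⟨α + 1, ?_⟩
      have hqd : q ∣ x := Nat.dvd_of_mod_eq_zero hmod
      rw [pow_succ, ← hα, Nat.div_mul_cancel hqd]

lemma S_pow_mul {q : ℕ} (hq : 1 < q) (k x : ℕ) : S q (q ^ k * x) = S q x := by
  rcases Nat.eq_zero_or_pos x with rfl | hx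
  · simp [S]
  · simp only [S]
    rw [Nat.digits_base_pow_mul hq hx]
    simp

lemma legendre {q : ℕ} (hq : q.Prime) (x : ℕ) :
    (q - 1) * padicValNat q (x !) = x - S q x := by
  haveI := Fact.mk hq
  simp only [S]
  exact sub_one_mul_padicValNat_factorial x

lemma S_add_le {q : ℕ} (hq : q.Prime) (a b : ℕ) : S q (a + b) ≤ S q a + S q b := by
  haveI := Fact.mk hq
  have hC : (a + b).choose a * a ! * b ! = (a + b)! := by
    have := Nat.choose_mul_factorial_mul_factorial (Nat.le_add_right a b)
    rwa [Nat.add_sub_cancel_left] at this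
  have hcne : (a + b).choose a ≠ 0 := (Nat.choose_pos (Nat.le_add_right a b)).ne'
  have hv : padicValNat q ((a + b)!) =
      padicValNat q ((a + b).choose a) + padicValNat q (a !) + padicValNat q (b !) := by
    rw [← hC, padicValNat.mul (Nat.mul_ne_zero hcne (Nat.factorial_ne_zero a))
      (Nat.factorial_ne_zero b), padicValNat.mul hcne (Nat.factorial_ne_zero a)]
  have h4 : (q - 1) * padicValNat q ((a + b)!) =
      (q - 1) * padicValNat q ((a + b).choose a) + (q - 1) * padicValNat q (a !) +
        (q - 1) * padicValNat q (b !) := by rw [hv]; ring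
  rw [legendre hq (a + b), legendre hq a, legendre hq b] at h4
  have s1 := S_le q a
  have s2 := S_le q b
  have s3 := S_le q (a + b)
  omega

lemma S_nsmul_le {q : ℕ} (hq : q.Prime) (c d : ℕ) : S q (c * d) ≤ c * S q d := by
  induction c with
  | zero => simp [S]
  | succ c ih =>
    have h2 : (c + 1) * d = c * d + d := by ring
    rw [h2]
    calc S q (c * d + d) ≤ S q (c * d) + S q d := S_add_le hq _ _
      _ ≤ c * S q d + S q d := by omega
      _ = (c + 1) * S q d := by ring

lemma S_mul_le {q : ℕ} (hq : q.Prime) : ∀ m d : ℕ, S q (m * d) ≤ S q m * S q d := by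
  have hq1 := hq.one_lt
  intro m
  induction m using Nat.strong_induction_on with
  | _ m ih =>
    intro d
    rcases Nat.eq_zero_or_pos m with rfl | hm
    · simp [S]
    have key : m * d = q * (m / q * d) + m % q * d := by
      have h := Nat.div_add_mod m q
      calc m * d = (q * (m / q) + m % q) * d := by rw [h]
        _ = q * (m / q * d) + m % q * d := by ring
    rw [key]
    have h1 : S q (q * (m / q * d) + m % q * d) ≤ S q (q * (m / q * d)) + S q (m % q * d) :=
      S_add_le hq _ _
    have h2 : S q (q * (m / q * d)) = S q (m / q * d) := by
      have := S_pow_mul hq1 1 (m / q * d); rwa [pow_one] at this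
    have h3 : S q (m / q * d) ≤ S q (m / q) * S q d := ih (m / q) (Nat.div_lt_self hm hq1) d
    have h4 : S q (m % q * d) ≤ m % q * S q d := S_nsmul_le hq (m % q) d
    have h5 : S q m = m % q + S q (m / q) := S_def hq1 hm
    have h6 : (S q (m / q) + m % q) * S q d = S q m * S q d := by rw [h5]; ring
    have h7 : (S q (m / q) + m % q) * S q d = S q (m / q) * S q d + m % q * S q d :=
      Nat.add_mul _ _ _
    omega

lemma not_dvd_choose {q k n : ℕ} (hq : q.Prime) (hkn : k ≤ n)
    (hS : S q k + S q (n - k) ≤ S q n) : ¬ q ∣ n.choose k := by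
  haveI := Fact.mk hq
  have h := sub_one_mul_padicValNat_choose_eq_sub_sum_digits (p := q) hkn
  simp only [S] at hS
  have hq1 := hq.one_lt
  have hz : padicValNat q (n.choose k) = 0 := by
    have h0 : (q - 1) * padicValNat q (n.choose k) = 0 := by omega
    have h2 : q - 1 ≠ 0 := by omega
    exact (Nat.mul_eq_zero.mp h0).resolve_left h2
  intro hdvd
  have h1 := one_le_padicValNat_of_dvd (Nat.choose_pos hkn).ne' hdvd
  omega

/-- number of partitions of `m*d` points into `m` blocks of size `d`, as a product -/
def P (d m : ℕ) : ℕ := ∏ i ∈ Finset.range m, Nat.choose ((i + 1) * d - 1) (d - 1)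

lemma P_mul {d : ℕ} (hd : 0 < d) (m : ℕ) :
    P d m * (d ! ^ m * m !) = (m * d)! := by
  induction m with
  | zero => simp [P]
  | succ m ih =>
    have hP : P d (m + 1) = P d m * ((m + 1) * d - 1).choose (d - 1) := by
      rw [P, P, Finset.prod_range_succ]
    have h1 : d - 1 ≤ (m + 1) * d - 1 := by
      have : d ≤ (m + 1) * d := Nat.le_mul_of_pos_left d (by omega)
      omega
    have h2 : (m + 1) * d - 1 - (d - 1) = m * d := by
      have h3 : (m + 1) * d = m * d + d := by ring
      omega
    have key := Nat.choose_mul_factorial_mul_factorial h1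
    rw [h2] at key
    have hfd : d * (d - 1)! = d ! := Nat.mul_factorial_pred hd.ne'
    have hmd1 : 0 < (m + 1) * d := by positivity
    have hfn : (m + 1) * d * ((m + 1) * d - 1)! = ((m + 1) * d)! :=
      Nat.mul_factorial_pred hmd1.ne'
    rw [hP, pow_succ, Nat.factorial_succ]
    calc P d m * ((m + 1) * d - 1).choose (d - 1) * (d ! ^ m * d ! * ((m + 1) * m !))
        = P d m * (d ! ^ m * m !) * (((m + 1) * d - 1).choose (d - 1) * d ! * (m + 1)) := by
          ring
      _ = (m * d)! * (((m + 1) * d - 1).choose (d - 1) * (d * (d - 1)!) * (m + 1)) := by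
          rw [ih, ← hfd]
      _ = (m + 1) * d * (((m + 1) * d - 1).choose (d - 1) * (d - 1)! * (m * d)!) := by ring
      _ = (m + 1) * d * ((m + 1) * d - 1)! := by rw [key]
      _ = ((m + 1) * d)! := hfn

lemma dichotomy {q d m : ℕ} (hq : q.Prime) (hd : 0 < d) (hm : 0 < m)
    (hndvd : ¬ q ∣ P d m) : S q d = 1 ∨ m * S q d = S q (m * d) := by
  haveI := Fact.mk hq
  have hq1 := hq.one_lt
  have hP0 : padicValNat q (P d m) = 0 := padicValNat.eq_zero_of_not_dvd hndvd
  have hPne : P d m ≠ 0 := by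
    intro h
    have hh := P_mul hd m
    rw [h, Nat.zero_mul] at hh
    exact Nat.factorial_ne_zero _ hh.symm
  have hfacne : d ! ^ m * m ! ≠ 0 := by positivity
  have hv : padicValNat q ((m * d)!) =
      padicValNat q (P d m) + (m * padicValNat q (d !) + padicValNat q (m !)) := by
    rw [← P_mul hd m, padicValNat.mul hPne hfacne,
      padicValNat.mul (by positivity) (Nat.factorial_ne_zero m),
      padicValNat.pow (d !) m]
  have h4 : (q - 1) * padicValNat q ((m * d)!) =
      (q - 1) * padicValNat q (P d m) +
        (m * ((q - 1) * padicValNat q (d !)) + (q - 1) * padicValNat q (m !)) := by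
    rw [hv]; ring
  rw [legendre hq (m * d), legendre hq d, legendre hq m, hP0, Nat.mul_zero] at h4
  have hsd := S_le q d
  have hsm := S_le q m
  have hsmd := S_le q (m * d)
  have hmdistr : m * (d - S q d) + m * S q d = m * d := by
    rw [← Nat.mul_add]
    congr 1
    omega
  have heq : m * S q d + S q m = m + S q (m * d) := by omega
  have hmul := S_mul_le hq m d
  by_cases hSm : S q m = m
  · right; omega
  · left
    have hSmlt : S q m < m := lt_of_le_of_ne hsm hSm
    have hSd1 : 1 ≤ S q d := S_pos hq1 hd
    by_contra hne
    have hSd2 : 2 ≤ S q d := by omega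
    have e1 : (m - S q m) * S q d + S q m * S q d = m * S q d := by
      rw [← Nat.add_mul]
      congr 1
      omega
    have e2 : 2 * (m - S q m) ≤ (m - S q m) * S q d := by
      calc 2 * (m - S q m) = (m - S q m) * 2 := by ring
        _ ≤ (m - S q m) * S q d := Nat.mul_le_mul_left _ hSd2
    omega

lemma exists_c {q : ℕ} (hq : q.Prime) :
    ∀ m, 1 ≤ m → (¬ ∃ α, m = q ^ α) →
      ∃ c, 1 ≤ c ∧ c < m ∧ S q c + S q (m - c) = S q m := by
  have hq1 := hq.one_lt
  intro m
  induction m using Nat.strong_induction_on with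
  | _ m ih =>
    intro hm hnp
    have hm2 : 2 ≤ m := by
      rcases Nat.lt_or_ge m 2 with h | h
      · exact absurd ⟨0, by rw [pow_zero]; omega⟩ hnp
      · exact h
    rcases Nat.lt_or_ge m q with hlt | hge
    · refine ⟨1, le_refl 1, by omega, ?_⟩
      rw [S_of_lt one_pos hq1, S_of_lt (by omega) (by omega), S_of_lt (by omega) hlt]
      omega
    · have hdm := Nat.div_add_mod m q
      have hmodlt : m % q < q := Nat.mod_lt m (by omega)
      have ha1 : 1 ≤ m / q := (Nat.one_le_div_iff (by omega)).mpr hge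
      by_cases hb : m % q = 0
      · have hqd : q ∣ m := Nat.dvd_of_mod_eq_zero hb
        have hmq : q * (m / q) = m := by omega
        have hanp : ¬ ∃ α, m / q = q ^ α := by
          rintro ⟨α, hα⟩
          exact hnp ⟨α + 1, by rw [pow_succ, ← hα, Nat.div_mul_cancel hqd]⟩
        obtain ⟨c', hc1, hc2, hc3⟩ := ih (m / q) (Nat.div_lt_self (by omega) hq1) ha1 hanp
        have hqcpos : 0 < q * c' := Nat.mul_pos (by omega) (by omega)
        refine ⟨q * c', by omega, ?_, ?_⟩
        · have : q * c' < q * (m / q) := by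
            exact (mul_lt_mul_iff_right₀ (show 0 < q by omega)).mpr hc2
          omega
        · have e : q * (m / q - c') + q * c' = q * (m / q) := by
            rw [← Nat.mul_add]
            congr 1
            omega
          have h2 : m - q * c' = q * (m / q - c') := by omega
          have hs1 : S q (q * c') = S q c' := by
            have := S_pow_mul hq1 1 c'; rwa [pow_one] at this
          have hs2 : S q (q * (m / q - c')) = S q (m / q - c') := by
            have := S_pow_mul hq1 1 (m / q - c'); rwa [pow_one] at this
          have hs3 : S q m = S q (m / q) := by
            rw [S_def hq1 (by omega), hb, Nat.zero_add]
          rw [h2, hs1, hs2, hs3]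
          exact hc3
      · refine ⟨m % q, by omega, by omega, ?_⟩
        have h2 : m - m % q = q * (m / q) := by omega
        have hs : S q (q * (m / q)) = S q (m / q) := by
          have := S_pow_mul hq1 1 (m / q); rwa [pow_one] at this
        rw [S_of_lt (by omega) hmodlt, h2, hs, S_def hq1 (show 0 < m by omega)]

lemma branch_small {q c d m : ℕ} (hq : q.Prime) (hcm : c ≤ m)
    (hsmall : m * S q d = S q (m * d)) :
    S q (c * d) + S q (m * d - c * d) ≤ S q (m * d) := by
  have h1 : m * d - c * d = (m - c) * d := (Nat.sub_mul m c d).symm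
  rw [h1]
  calc S q (c * d) + S q ((m - c) * d) ≤ c * S q d + (m - c) * S q d :=
        Nat.add_le_add (S_nsmul_le hq c d) (S_nsmul_le hq (m - c) d)
    _ = (c + (m - c)) * S q d := (Nat.add_mul _ _ _).symm
    _ = m * S q d := by congr 1; omega
    _ = S q (m * d) := hsmall

lemma branch_pow {q c d m α : ℕ} (hq1 : 1 < q) (hcm : c ≤ m) (hd : d = q ^ α)
    (hc : S q c + S q (m - c) = S q m) :
    S q (c * d) + S q (m * d - c * d) ≤ S q (m * d) := by
  subst hd
  have h1 : m * q ^ α - c * q ^ α = (m - c) * q ^ α := (Nat.sub_mul m c _).symm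
  rw [h1, mul_comm c, mul_comm (m - c), mul_comm m,
    S_pow_mul hq1, S_pow_mul hq1, S_pow_mul hq1]
  omega

end SW11

open SW11
theorem stmt_11 (n p r : ℕ) (hn : 9 ≤ n)
    (hnpp : ¬ ∃ (q a : ℕ), q.Prime ∧ n = q ^ a)
    (hp : p.Prime) (hr : r.Prime)
    (hdiv : ∀ k, 1 ≤ k → k ≤ n - 1 → p ∣ Nat.choose n k ∨ r ∣ Nat.choose n k)
    (d : ℕ) (hd1 : 1 < d) (hdn : d < n) (hdvd : d ∣ n) :
    p ∣ Nat.factorial n / (Nat.factorial d ^ (n / d) * Nat.factorial (n / d)) ∨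
    r ∣ Nat.factorial n / (Nat.factorial d ^ (n / d) * Nat.factorial (n / d)) := by
  have hn0 : 0 < n := by omega
  have hd0 : 0 < d := by omega
  obtain ⟨m, hnm⟩ := hdvd
  have hdm : n / d = m := by rw [hnm]; exact Nat.mul_div_cancel_left m hd0
  rw [hdm]
  have hmd : m * d = n := by rw [hnm, Nat.mul_comm]
  have hm2 : 2 ≤ m := by
    rcases Nat.lt_or_ge m 2 with h | h
    · exfalso
      have h01 : m = 0 ∨ m = 1 := by omega
      rcases h01 with h1 | h1 <;> rw [h1] at hmd <;> omega
    · exact h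
  have hMeq : n ! / (d ! ^ m * m !) = P d m := by
    have hPm := P_mul hd0 m
    rw [hmd] at hPm
    exact Nat.div_eq_of_eq_mul_left (by positivity) hPm.symm
  by_contra hcon
  push_neg at hcon
  obtain ⟨hpc, hrc⟩ := hcon
  rw [hMeq] at hpc hrc
  have dp := dichotomy hp hd0 (by omega) hpc
  have dr := dichotomy hr hd0 (by omega) hrc
  have hnotpow : ∀ qq : ℕ, qq.Prime → S qq d = 1 → ¬ ∃ α, m = qq ^ α := by
    intro qq hqq hS hex
    obtain ⟨α, hα⟩ := hex
    obtain ⟨β, hβ⟩ := S_eq_one hqq.one_lt hS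
    exact hnpp ⟨qq, α + β, hqq, by rw [← hmd, hα, hβ, ← pow_add]⟩
  have hkey : ∃ c, 1 ≤ c ∧ c < m ∧
      S p (c * d) + S p (m * d - c * d) ≤ S p (m * d) ∧
      S r (c * d) + S r (m * d - c * d) ≤ S r (m * d) := by
    rcases dp with dp1 | dp2
    · obtain ⟨α, hα⟩ := S_eq_one hp.one_lt dp1
      rcases dr with dr1 | dr2
      · by_cases hpr : p = r
        · subst hpr
          obtain ⟨c, h1, h2, h3⟩ := exists_c hp m (by omega) (hnotpow p hp dp1)
          exact ⟨c, h1, h2, branch_pow hp.one_lt (by omega) hα h3,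
            branch_pow hp.one_lt (by omega) hα h3⟩
        · exfalso
          obtain ⟨β, hβ⟩ := S_eq_one hr.one_lt dr1
          have hα1 : α ≠ 0 := by rintro rfl; rw [pow_zero] at hα; omega
          have hβ1 : β ≠ 0 := by rintro rfl; rw [pow_zero] at hβ; omega
          have h1 : p ∣ d := hα ▸ dvd_pow_self p hα1
          have h2 : p ∣ r ^ β := hβ ▸ h1
          exact hpr ((Nat.prime_dvd_prime_iff_eq hp hr).mp (hp.dvd_of_dvd_pow h2))
      · obtain ⟨c, h1, h2, h3⟩ := exists_c hp m (by omega) (hnotpow p hp dp1)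
        exact ⟨c, h1, h2, branch_pow hp.one_lt (by omega) hα h3,
          branch_small hr (by omega) dr2⟩
    · rcases dr with dr1 | dr2
      · obtain ⟨α, hα⟩ := S_eq_one hr.one_lt dr1
        obtain ⟨c, h1, h2, h3⟩ := exists_c hr m (by omega) (hnotpow r hr dr1)
        exact ⟨c, h1, h2, branch_small hp (by omega) dp2,
          branch_pow hr.one_lt (by omega) hα h3⟩
      · exact ⟨1, le_refl 1, by omega, branch_small hp (by omega) dp2,
          branch_small hr (by omega) dr2⟩
  obtain ⟨c, hc1, hc2, hIp, hIr⟩ := hkey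
  have hcd0 : 0 < c * d := Nat.mul_pos (by omega) hd0
  have hcdle : c * d ≤ (m - 1) * d := Nat.mul_le_mul_right d (by omega)
  have hsub : (m - 1) * d = m * d - 1 * d := Nat.sub_mul m 1 d
  have hone : 1 * d = d := Nat.one_mul d
  have hk1 : 1 ≤ c * d := hcd0
  have hkn1 : c * d ≤ n - 1 := by omega
  have hkn : c * d ≤ n := by omega
  have hnp : ¬ p ∣ n.choose (c * d) :=
    not_dvd_choose hp hkn (by rw [← hmd]; exact hIp)
  have hnr : ¬ r ∣ n.choose (c * d) :=
    not_dvd_choose hr hkn (by rw [← hmd]; exact hIr)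
  rcases hdiv (c * d) hk1 hkn1 with h | h
  · exact hnp h
  · exact hnr h
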